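/- For 0 ≤ i ≤ n, the number of Raney sequences H ∈ R_{n+1}^2 containing exactly i even elements equals the Narayana number (n+1)!·n! / ((n-i+1)!·(n-i)!·(i+1)!·i!). -/

import Mathlib

/-- The set of Raney sequences `R_m^2`: subsets `H ⊆ {1,…,2m}` with `|H| = m` such that
`|H ∩ {1,…,k}| ≥ k/2` for all `k`. -/
def RaneySet (s n : ℕ) : Set (Finset ℕ) :=
  {H | H ⊆ Finset.Icc 1 (s * n) ∧ H.card = n ∧
    ∀ k, 1 ≤ k → k ≤ s * n → k ≤ s * (H ∩ Finset.Icc 1 k).card}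

open Finset
namespace Stmt4

/-- prefix count: number of elements ≤ u -/
def pc (F : Finset ℕ) (u : ℕ) : ℕ := (F.filter (· ≤ u)).card

/-- tail swap at position u -/
def sw (S T : Finset ℕ) (u : ℕ) : Finset ℕ := S.filter (· ≤ u) ∪ T.filter (fun x => u < x)


lemma pc_succ (F : Finset ℕ) (u : ℕ) :
    pc F (u+1) = pc F u + if u+1 ∈ F then 1 else 0 := by
  unfold pc
  rw [show F.filter (· ≤ u+1) = F.filter (· ≤ u) ∪ F.filter (· = u+1) by
    ext x; simp only [mem_union, mem_filter]; constructor
    · rintro ⟨h1, h2⟩; rcases Nat.lt_or_ge x (u+1) with h|h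
      · exact Or.inl ⟨h1, by omega⟩
      · exact Or.inr ⟨h1, by omega⟩
    · rintro (⟨h1,h2⟩|⟨h1,h2⟩) <;> exact ⟨h1, by omega⟩]
  rw [card_union_of_disjoint (by
    simp only [disjoint_left, mem_filter]; rintro x ⟨_,h⟩ ⟨_,h'⟩; omega)]
  congr 1
  rw [filter_eq']
  split <;> simp

lemma pc_zero {F : Finset ℕ} (h0 : 0 ∉ F) : pc F 0 = 0 := by
  unfold pc
  rw [card_eq_zero]
  ext x; simp only [mem_filter, notMem_empty, iff_false]
  rintro ⟨hx, hx0⟩; interval_cases x; exact h0 hx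

lemma pc_mono (F : Finset ℕ) {u v : ℕ} (h : u ≤ v) : pc F u ≤ pc F v := by
  apply card_le_card
  intro x hx
  simp only [mem_filter] at hx ⊢
  exact ⟨hx.1, hx.2.trans h⟩

lemma pc_top {F : Finset ℕ} {n u : ℕ} (hF : F ⊆ Icc 1 n) (h : n ≤ u) : pc F u = F.card := by
  unfold pc
  rw [filter_true_of_mem]
  intro x hx
  have := hF hx
  simp only [mem_Icc] at this
  omega

lemma pc_le (F : Finset ℕ) (u : ℕ) : pc F u ≤ F.card := card_le_card (filter_subset _ _)



/-- tail swap at position u -/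
lemma sw_subset {S T : Finset ℕ} {n : ℕ} (hS : S ⊆ Icc 1 n) (hT : T ⊆ Icc 1 n) (u : ℕ) :
    sw S T u ⊆ Icc 1 n :=
  union_subset ((filter_subset _ _).trans hS) ((filter_subset _ _).trans hT)

lemma sw_filter_le (S T : Finset ℕ) (u : ℕ) {v : ℕ} (h : v ≤ u) :
    (sw S T u).filter (· ≤ v) = S.filter (· ≤ v) := by
  unfold sw
  rw [filter_union]
  ext x
  simp only [mem_union, mem_filter]
  constructor
  · rintro (⟨⟨h1,h2⟩,h3⟩|⟨⟨h1,h2⟩,h3⟩) <;> [exact ⟨h1,h3⟩; omega]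
  · rintro ⟨h1,h2⟩; exact Or.inl ⟨⟨h1, by omega⟩, h2⟩

lemma sw_pc_le (S T : Finset ℕ) (u : ℕ) {v : ℕ} (h : v ≤ u) :
    pc (sw S T u) v = pc S v := by
  unfold pc; rw [sw_filter_le _ _ _ h]

lemma sw_filter_gt (S T : Finset ℕ) (u : ℕ) :
    (sw S T u).filter (fun x => u < x) = T.filter (fun x => u < x) := by
  unfold sw
  rw [filter_union]
  ext x
  simp only [mem_union, mem_filter]
  constructor
  · rintro (⟨⟨h1,h2⟩,h3⟩|⟨⟨h1,h2⟩,h3⟩) <;> [omega; exact ⟨h1,h3⟩]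
  · rintro ⟨h1,h2⟩; exact Or.inr ⟨⟨h1, h2⟩, h2⟩

lemma pc_split (F : Finset ℕ) {u v : ℕ} (h : u ≤ v) :
    pc F v = pc F u + ((F.filter (fun x => u < x)).filter (· ≤ v)).card := by
  unfold pc
  rw [← card_union_of_disjoint (by
    simp only [disjoint_left, mem_filter]; rintro x ⟨_,h2⟩ ⟨⟨_,h3⟩,_⟩; omega)]
  congr 1
  ext x
  simp only [mem_union, mem_filter]
  constructor
  · rintro ⟨h1,h2⟩
    rcases le_or_gt x u with h3|h3
    · exact Or.inl ⟨h1, h3⟩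
    · exact Or.inr ⟨⟨h1,h3⟩,h2⟩
  · rintro (⟨h1,h2⟩|⟨⟨h1,h2⟩,h3⟩) <;> exact ⟨h1, by omega⟩

lemma sw_pc_ge (S T : Finset ℕ) {u v : ℕ} (h : u ≤ v) :
    pc (sw S T u) v + pc T u = pc S u + pc T v := by
  rw [pc_split (sw S T u) h, pc_split T h, sw_pc_le S T u le_rfl]
  rw [show ((sw S T u).filter (fun x => u < x)).filter (· ≤ v)
      = (T.filter (fun x => u < x)).filter (· ≤ v) by rw [sw_filter_gt]]
  omega

lemma sw_card (S T : Finset ℕ) {n : ℕ} (hS : S ⊆ Icc 1 n) (hT : T ⊆ Icc 1 n) (u : ℕ) :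
    (sw S T u).card + pc T u = pc S u + T.card := by
  have h1 := sw_pc_ge S T (Nat.le_max_left u n)
  rwa [pc_top (sw_subset hS hT u) (Nat.le_max_right u n),
      pc_top hT (Nat.le_max_right u n)] at h1

lemma sw_sw (S T : Finset ℕ) (u : ℕ) : sw (sw S T u) (sw T S u) u = S := by
  unfold sw
  rw [filter_union, filter_union]
  have e1 : (S.filter (· ≤ u)).filter (· ≤ u) = S.filter (· ≤ u) := by
    rw [filter_filter]; apply filter_congr; intros; simp_all
  have e2 : (T.filter (fun x => u < x)).filter (· ≤ u) = ∅ := by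
    rw [filter_filter]; apply filter_false_of_mem; intros; omega
  have e3 : (T.filter (· ≤ u)).filter (fun x => u < x) = ∅ := by
    rw [filter_filter]; apply filter_false_of_mem; intros; omega
  have e4 : (S.filter (fun x => u < x)).filter (fun x => u < x) = S.filter (fun x => u < x) := by
    rw [filter_filter]; apply filter_congr; intros; simp_all
  rw [e1, e2, e3, e4, union_empty, empty_union]
  ext x
  simp only [mem_union, mem_filter]
  constructor
  · rintro (⟨h,_⟩|⟨h,_⟩) <;> exact h
  · intro h; rcases le_or_gt x u with h2|h2
    · exact Or.inl ⟨h, h2⟩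
    · exact Or.inr ⟨h, h2⟩


def rfm (p : Finset ℕ × Finset ℕ) (h : ∃ u, pc p.1 u < pc p.2 u) : Finset ℕ × Finset ℕ :=
  (sw p.1 p.2 (Nat.find h), sw p.2 p.1 (Nat.find h))


lemma zero_not_mem {F : Finset ℕ} {n : ℕ} (hF : F ⊆ Icc 1 n) : 0 ∉ F := by
  intro h; have := hF h; simp at this

lemma find_step {S T : Finset ℕ} {n : ℕ} (hS : S ⊆ Icc 1 n) (hT : T ⊆ Icc 1 n)
    (h : ∃ u, pc S u < pc T u) : pc T (Nat.find h) = pc S (Nat.find h) + 1 := by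
  have hspec := Nat.find_spec h
  have hne : Nat.find h ≠ 0 := by
    intro h0
    rw [h0, pc_zero (zero_not_mem hS), pc_zero (zero_not_mem hT)] at hspec
    omega
  obtain ⟨w, hw⟩ := Nat.exists_eq_succ_of_ne_zero hne
  have hmin := Nat.find_min h (show w < Nat.find h by omega)
  have h1 := pc_succ T w
  have h2 := pc_succ S w
  have hs2 : pc S (Nat.find h) < pc T (Nat.find h) := hspec
  rw [hw] at hs2 ⊢
  rw [show w.succ = w + 1 from rfl] at hs2 ⊢
  split at h1 <;> split at h2 <;> omega

lemma rfm_vio {p : Finset ℕ × Finset ℕ} {n : ℕ} (hS : p.1 ⊆ Icc 1 n) (hT : p.2 ⊆ Icc 1 n)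
    (h : ∃ u, pc p.1 u < pc p.2 u) :
    ∃ h' : ∃ u, pc (rfm p h).1 u < pc (rfm p h).2 u, Nat.find h' = Nat.find h := by
  have hstep := find_step hS hT h
  have hkey : pc (rfm p h).1 (Nat.find h) < pc (rfm p h).2 (Nat.find h) := by
    show pc (sw p.1 p.2 (Nat.find h)) _ < pc (sw p.2 p.1 (Nat.find h)) _
    rw [sw_pc_le _ _ _ le_rfl, sw_pc_le _ _ _ le_rfl, hstep]
    omega
  refine ⟨⟨_, hkey⟩, ?_⟩
  rw [Nat.find_eq_iff]
  refine ⟨hkey, fun v hv => ?_⟩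
  show ¬ pc (sw p.1 p.2 (Nat.find h)) v < pc (sw p.2 p.1 (Nat.find h)) v
  rw [sw_pc_le _ _ _ (le_of_lt hv), sw_pc_le _ _ _ (le_of_lt hv)]
  exact Nat.find_min h hv

lemma rfm_rfm {p : Finset ℕ × Finset ℕ} {n : ℕ} (hS : p.1 ⊆ Icc 1 n) (hT : p.2 ⊆ Icc 1 n)
    (h : ∃ u, pc p.1 u < pc p.2 u)
    (h' : ∃ u, pc (rfm p h).1 u < pc (rfm p h).2 u) : rfm (rfm p h) h' = p := by
  obtain ⟨h'', hfind⟩ := rfm_vio hS hT h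
  have : Nat.find h' = Nat.find h := by rw [← hfind]
  show (sw (rfm p h).1 (rfm p h).2 (Nat.find h'), sw (rfm p h).2 (rfm p h).1 (Nat.find h')) = p
  rw [this]
  show (sw (sw p.1 p.2 _) (sw p.2 p.1 _) _, sw (sw p.2 p.1 _) (sw p.1 p.2 _) _) = p
  rw [sw_sw, sw_sw]



def pairs (n a b : ℕ) : Finset (Finset ℕ × Finset ℕ) :=
  (Icc 1 n).powersetCard a ×ˢ (Icc 1 n).powersetCard b

lemma mem_pairs {n a b : ℕ} {p : Finset ℕ × Finset ℕ} :
    p ∈ pairs n a b ↔ (p.1 ⊆ Icc 1 n ∧ p.1.card = a) ∧ (p.2 ⊆ Icc 1 n ∧ p.2.card = b) := by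
  simp [pairs, mem_product, mem_powersetCard]

def good (n i : ℕ) : Finset (Finset ℕ × Finset ℕ) :=
  (pairs n i i).filter (fun p => ∀ u ≤ n, pc p.2 u ≤ pc p.1 u)

def bad (n i : ℕ) : Finset (Finset ℕ × Finset ℕ) :=
  (pairs n i i).filter (fun p => ¬ ∀ u ≤ n, pc p.2 u ≤ pc p.1 u)

lemma pairs_card (n a b : ℕ) : (pairs n a b).card = n.choose a * n.choose b := by
  rw [pairs, card_product, card_powersetCard, card_powersetCard, Nat.card_Icc]
  simp

lemma good_add_bad (n i : ℕ) :
    (good n i).card + (bad n i).card = n.choose i * n.choose i := by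
  rw [good, bad, card_filter_add_card_filter_not, pairs_card]

/-- a bad pair has an (unbounded) violation -/
lemma bad_vio {n i : ℕ} {p : Finset ℕ × Finset ℕ} (hp : p ∈ bad n i) :
    ∃ u, pc p.1 u < pc p.2 u := by
  rw [bad, mem_filter] at hp
  obtain ⟨_, h⟩ := hp
  push_neg at h
  obtain ⟨u, _, h⟩ := h
  exact ⟨u, h⟩

/-- a (i-1, i+1) pair has a violation -/
lemma tgt_vio {n i : ℕ} {p : Finset ℕ × Finset ℕ} (hi : 1 ≤ i)
    (hp : p ∈ pairs n (i-1) (i+1)) : ∃ u, pc p.1 u < pc p.2 u := by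
  rw [mem_pairs] at hp
  refine ⟨n, ?_⟩
  rw [pc_top hp.1.1 le_rfl, pc_top hp.2.1 le_rfl, hp.1.2, hp.2.2]
  omega

lemma vio_le_n {n a b : ℕ} {p : Finset ℕ × Finset ℕ} (hp : p ∈ pairs n a b)
    (h : ∃ u, pc p.1 u < pc p.2 u) : Nat.find h ≤ n := by
  by_contra hc
  have := Nat.find_spec h
  rw [mem_pairs] at hp
  rw [pc_top hp.1.1 (by omega), pc_top hp.2.1 (by omega)] at this
  have h1 := pc_top hp.1.1 (le_refl n)
  have h2 := pc_top hp.2.1 (le_refl n)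
  have := Nat.find_min h (show n < Nat.find h by omega)
  omega

lemma rfm_mem_tgt {n i : ℕ} {p : Finset ℕ × Finset ℕ} (hp : p ∈ bad n i)
    (h : ∃ u, pc p.1 u < pc p.2 u) : rfm p h ∈ pairs n (i-1) (i+1) := by
  rw [bad, mem_filter] at hp
  have hm := hp.1
  rw [mem_pairs] at hm
  obtain ⟨⟨hS, hSc⟩, hT, hTc⟩ := hm
  have hstep := find_step hS hT h
  have c1 := sw_card p.1 p.2 hS hT (Nat.find h)
  have c2 := sw_card p.2 p.1 hT hS (Nat.find h)
  rw [mem_pairs]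
  simp only [rfm]
  exact ⟨⟨sw_subset hS hT _, by omega⟩, ⟨sw_subset hT hS _, by omega⟩⟩

lemma rfm_mem_bad {n i : ℕ} (hi : 1 ≤ i) {p : Finset ℕ × Finset ℕ}
    (hp : p ∈ pairs n (i-1) (i+1)) (h : ∃ u, pc p.1 u < pc p.2 u) : rfm p h ∈ bad n i := by
  have hm := hp
  rw [mem_pairs] at hm
  obtain ⟨⟨hS, hSc⟩, hT, hTc⟩ := hm
  have hstep := find_step hS hT h
  have c1 := sw_card p.1 p.2 hS hT (Nat.find h)
  have c2 := sw_card p.2 p.1 hT hS (Nat.find h)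
  have hfle : Nat.find h ≤ n := vio_le_n hp h
  rw [bad, mem_filter, mem_pairs]
  simp only [rfm]
  refine ⟨⟨⟨sw_subset hS hT _, by omega⟩, ⟨sw_subset hT hS _, by omega⟩⟩, ?_⟩
  intro hall
  have hh := hall (Nat.find h) hfle
  rw [sw_pc_le _ _ _ le_rfl, sw_pc_le _ _ _ le_rfl] at hh
  have := Nat.find_spec h
  omega

lemma bad_card {n i : ℕ} (hi : 1 ≤ i) :
    (bad n i).card = n.choose (i-1) * n.choose (i+1) := by
  rw [← pairs_card]
  refine card_bij' (fun p hp => rfm p (bad_vio hp)) (fun p hp => rfm p (tgt_vio hi hp))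
    (fun p hp => rfm_mem_tgt hp (bad_vio hp)) (fun p hp => rfm_mem_bad hi hp (tgt_vio hi hp))
    (fun p hp => ?_) (fun p hp => ?_)
  · have hm := hp; rw [bad, mem_filter, mem_pairs] at hm
    exact rfm_rfm hm.1.1.1 hm.1.2.1 (bad_vio hp) _
  · have hm := hp; rw [mem_pairs] at hm
    exact rfm_rfm hm.1.1 hm.2.1 (tgt_vio hi hp) _



def fwd (n : ℕ) (H : Finset ℕ) : Finset ℕ × Finset ℕ :=
  ((Icc 1 n).filter (fun t => 2*t ∈ H), (Icc 1 n).filter (fun t => 2*t+1 ∉ H))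

def bwd (n : ℕ) (p : Finset ℕ × Finset ℕ) : Finset ℕ :=
  (Icc 1 (2*n+2)).filter (fun k => if k % 2 = 0 then k/2 ∈ p.1 else k/2 ∉ p.2)

section Fwd
variable {n : ℕ} {H : Finset ℕ} (hsub : H ⊆ Icc 1 (2*n+2)) (hcard : H.card = n+1)
  (hran : ∀ k, 1 ≤ k → k ≤ 2*n+2 → k ≤ 2 * pc H k)

include hsub hran in
lemma one_mem : 1 ∈ H := by
  have h1 := hran 1 le_rfl (by omega)
  have h0 := pc_zero (zero_not_mem hsub)
  have hs := pc_succ H 0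
  rw [h0] at hs
  by_contra hc
  rw [if_neg hc] at hs
  rw [show (0:ℕ)+1 = 1 from rfl] at hs
  omega

include hsub hcard hran in
lemma top_not_mem : 2*n+2 ∉ H := by
  intro hc
  have h1 := hran (2*n+1) (by omega) (by omega)
  have h2 : pc H (2*n+1) ≤ H.card - 1 := by
    have : H.filter (· ≤ 2*n+1) ⊆ H.erase (2*n+2) := by
      intro x hx
      simp only [mem_filter] at hx
      exact mem_erase.2 ⟨by omega, hx.1⟩
    calc pc H (2*n+1) ≤ (H.erase (2*n+2)).card := card_le_card this
    _ = H.card - 1 := card_erase_of_mem hc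
  omega

include hsub hran in
/-- key forward induction -/
lemma fwd_ind : ∀ u, u ≤ n →
    pc H (2*u+1) + pc (fwd n H).2 u = pc (fwd n H).1 u + u + 1 := by
  have h1 : (1:ℕ) ∈ H := one_mem hsub hran
  have hS : (fwd n H).1 ⊆ Icc 1 n := filter_subset _ _
  have hT : (fwd n H).2 ⊆ Icc 1 n := filter_subset _ _
  intro u
  induction u with
  | zero =>
    intro _
    rw [pc_zero (zero_not_mem hS), pc_zero (zero_not_mem hT)]
    have hs := pc_succ H 0
    rw [pc_zero (zero_not_mem hsub), if_pos (by exact h1)] at hs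
    simpa using hs
  | succ u ih =>
    intro hu
    have ihh := ih (by omega)
    have a1 := pc_succ H (2*u+1)
    have a2 := pc_succ H (2*u+2)
    rw [show 2*u+1+1 = 2*u+2 by ring] at a1
    rw [show 2*u+2+1 = 2*u+3 by ring] at a2
    have e2 : pc (fwd n H).2 (u+1) = pc (fwd n H).2 u + (if 2*u+3 ∈ H then 0 else 1) := by
      rw [pc_succ]
      congr 1
      have : u+1 ∈ (fwd n H).2 ↔ ¬ (2*u+3 ∈ H) := by
        simp only [fwd, mem_filter, mem_Icc]
        constructor
        · rintro ⟨_, h⟩; rwa [show 2*(u+1)+1 = 2*u+3 by ring] at h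
        · intro h; exact ⟨⟨by omega, by omega⟩, by rwa [show 2*(u+1)+1 = 2*u+3 by ring]⟩
      by_cases hm : 2*u+3 ∈ H
      · rw [if_neg (by simp [this, hm]), if_pos hm]
      · rw [if_pos (this.2 hm), if_neg hm]
    have e3 : pc (fwd n H).1 (u+1) = pc (fwd n H).1 u + (if 2*u+2 ∈ H then 1 else 0) := by
      rw [pc_succ]
      congr 1
      have : u+1 ∈ (fwd n H).1 ↔ 2*u+2 ∈ H := by
        simp only [fwd, mem_filter, mem_Icc]
        constructor
        · rintro ⟨_, h⟩; rwa [show 2*(u+1) = 2*u+2 by ring] at h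
        · intro h; exact ⟨⟨by omega, by omega⟩, by rwa [show 2*(u+1) = 2*u+2 by ring]⟩
      by_cases hm : 2*u+2 ∈ H
      · rw [if_pos (this.2 hm), if_pos hm]
      · rw [if_neg (by simp [this, hm]), if_neg hm]
    rw [show 2*(u+1)+1 = 2*u+3 by ring, a2, a1, e2, e3]
    by_cases hm1 : 2*u+2 ∈ H <;> by_cases hm2 : 2*u+3 ∈ H <;>
      simp only [hm1, hm2, if_true, if_false] <;> omega

include hsub hran in
lemma fwd_evens : ∀ u, u ≤ n →
    pc (H.filter (fun x => Even x)) (2*u+1) = pc (fwd n H).1 u := by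
  have hS : (fwd n H).1 ⊆ Icc 1 n := filter_subset _ _
  have hHE : H.filter (fun x => Even x) ⊆ Icc 1 (2*n+2) := (filter_subset _ _).trans hsub
  intro u
  induction u with
  | zero =>
    intro _
    rw [pc_zero (zero_not_mem hS)]
    have hs := pc_succ (H.filter (fun x => Even x)) 0
    rw [pc_zero (zero_not_mem hHE)] at hs
    have : (0:ℕ)+1 ∉ H.filter (fun x => Even x) := by
      simp only [mem_filter]
      rintro ⟨_, h⟩
      rw [Nat.even_iff] at h
      omega
    rw [if_neg this] at hs
    simpa using hs
  | succ u ih =>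
    intro hu
    have ihh := ih (by omega)
    have a1 := pc_succ (H.filter (fun x => Even x)) (2*u+1)
    have a2 := pc_succ (H.filter (fun x => Even x)) (2*u+2)
    have e3 : pc (fwd n H).1 (u+1) = pc (fwd n H).1 u + (if 2*u+2 ∈ H then 1 else 0) := by
      rw [pc_succ]
      congr 1
      have : u+1 ∈ (fwd n H).1 ↔ 2*u+2 ∈ H := by
        simp only [fwd, mem_filter, mem_Icc]
        constructor
        · rintro ⟨_, h⟩; rwa [show 2*(u+1) = 2*u+2 by ring] at h
        · intro h; exact ⟨⟨by omega, by omega⟩, by rwa [show 2*(u+1) = 2*u+2 by ring]⟩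
      by_cases hm : 2*u+2 ∈ H
      · rw [if_pos (this.2 hm), if_pos hm]
      · rw [if_neg (by simp [this, hm]), if_neg hm]
    have m1 : (2*u+1+1 ∈ H.filter (fun x => Even x)) ↔ 2*u+2 ∈ H := by
      simp only [mem_filter, show 2*u+1+1 = 2*u+2 by ring]
      constructor
      · exact fun h => h.1
      · intro h; exact ⟨h, by exact ⟨u+1, by ring⟩⟩
    have m2 : (2*u+2+1 ∈ H.filter (fun x => Even x)) = False := by
      simp only [mem_filter, eq_iff_iff, iff_false]
      rintro ⟨_, h⟩
      rw [Nat.even_iff] at h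
      omega
    rw [show 2*(u+1)+1 = 2*u+2+1 by ring, a2, a1, e3]
    simp only [m2, if_false]
    by_cases hm : 2*u+2 ∈ H <;> simp only [m1, hm, if_true, if_false, if_pos, if_neg,
      not_false_iff, ihh] <;> omega

include hsub hcard hran in
lemma fwd_S_card : (fwd n H).1.card = (H.filter (fun x => Even x)).card := by
  have hS : (fwd n H).1 ⊆ Icc 1 n := filter_subset _ _
  have hHE : H.filter (fun x => Even x) ⊆ Icc 1 (2*n+2) := (filter_subset _ _).trans hsub
  have h1 := fwd_evens hsub hran n le_rfl
  have h2 := pc_succ (H.filter (fun x => Even x)) (2*n+1)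
  have h3 : 2*n+1+1 ∉ H.filter (fun x => Even x) := by
    simp only [mem_filter, show 2*n+1+1 = 2*n+2 by ring]
    rintro ⟨h, _⟩
    exact top_not_mem hsub hcard hran h
  rw [if_neg h3] at h2
  have h4 := pc_top hHE (le_refl (2*n+2))
  rw [show 2*n+1+1 = 2*n+2 by ring] at h2
  have h5 := pc_top hS (le_refl n)
  omega

include hsub hcard hran in
lemma fwd_T_card : (fwd n H).2.card = (H.filter (fun x => Even x)).card := by
  have hS : (fwd n H).1 ⊆ Icc 1 n := filter_subset _ _
  have hT : (fwd n H).2 ⊆ Icc 1 n := filter_subset _ _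
  have h1 := fwd_ind hsub hran n le_rfl
  have h2 := pc_succ H (2*n+1)
  rw [if_neg (by rw [show 2*n+1+1 = 2*n+2 by ring]; exact top_not_mem hsub hcard hran),
    show 2*n+1+1 = 2*n+2 by ring] at h2
  have h4 := pc_top hsub (le_refl (2*n+2))
  have h5 := pc_top hS (le_refl n)
  have h6 := pc_top hT (le_refl n)
  have h7 := fwd_S_card hsub hcard hran
  omega

include hsub hran in
lemma fwd_dom : ∀ u, u ≤ n → pc (fwd n H).2 u ≤ pc (fwd n H).1 u := by
  intro u hu
  have h1 := fwd_ind hsub hran u hu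
  have h2 := hran (2*u+1) (by omega) (by omega)
  omega

end Fwd

section Bwd
variable {n : ℕ} {p : Finset ℕ × Finset ℕ} (hS : p.1 ⊆ Icc 1 n) (hT : p.2 ⊆ Icc 1 n)

lemma bwd_subset : bwd n p ⊆ Icc 1 (2*n+2) := filter_subset _ _

lemma bwd_mem {k : ℕ} : k ∈ bwd n p ↔
    (1 ≤ k ∧ k ≤ 2*n+2) ∧ (if k % 2 = 0 then k/2 ∈ p.1 else k/2 ∉ p.2) := by
  simp [bwd, mem_filter, mem_Icc]

include hT in
lemma bwd_mem_even {u : ℕ} (hu : u + 1 ≤ n + 1) : (2*u+2 ∈ bwd n p) ↔ u+1 ∈ p.1 := by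
  rw [bwd_mem]
  have h1 : (2*u+2) % 2 = 0 := by omega
  have h2 : (2*u+2) / 2 = u+1 := by omega
  rw [if_pos h1, h2]
  constructor
  · exact fun h => h.2
  · intro h; exact ⟨⟨by omega, by omega⟩, h⟩

include hS in
lemma bwd_mem_odd {u : ℕ} (hu : u ≤ n) : (2*u+1 ∈ bwd n p) ↔ u ∉ p.2 := by
  rw [bwd_mem]
  have h1 : (2*u+1) % 2 = 1 := by omega
  have h2 : (2*u+1) / 2 = u := by omega
  rw [if_neg (by omega), h2]
  constructor
  · exact fun h => h.2
  · intro h; exact ⟨⟨by omega, by omega⟩, h⟩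

include hS hT in
lemma bwd_ind : ∀ u, u ≤ n →
    pc (bwd n p) (2*u+1) + pc p.2 u = pc p.1 u + u + 1 := by
  intro u
  induction u with
  | zero =>
    intro _
    rw [pc_zero (zero_not_mem hS), pc_zero (zero_not_mem hT)]
    have hs := pc_succ (bwd n p) 0
    rw [pc_zero (zero_not_mem (bwd_subset)), if_pos (by
      rw [show (0:ℕ)+1 = 2*0+1 by ring, bwd_mem_odd hS (by omega)]
      exact fun h => zero_not_mem hT h)] at hs
    simpa using hs
  | succ u ih =>
    intro hu
    have ihh := ih (by omega)
    have a1 := pc_succ (bwd n p) (2*u+1)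
    have a2 := pc_succ (bwd n p) (2*u+2)
    rw [show 2*u+1+1 = 2*u+2 by ring] at a1
    rw [show 2*u+2+1 = 2*u+3 by ring] at a2
    have m1 : (2*u+2 ∈ bwd n p) ↔ u+1 ∈ p.1 := bwd_mem_even hT (by omega)
    have m2 : (2*u+3 ∈ bwd n p) ↔ u+1 ∉ p.2 := by
      rw [show 2*u+3 = 2*(u+1)+1 by ring]
      exact bwd_mem_odd hS (by omega)
    have b1 := pc_succ p.1 u
    have b2 := pc_succ p.2 u
    rw [show 2*(u+1)+1 = 2*u+3 by ring, a2, a1, b1, b2]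
    by_cases hm1 : u+1 ∈ p.1 <;> by_cases hm2 : u+1 ∈ p.2 <;>
      simp only [m1, m2, hm1, hm2, if_true, if_false, not_true, not_false_iff] <;> omega

include hS hT in
lemma bwd_card (hdom : ∀ u, u ≤ n → pc p.2 u ≤ pc p.1 u) :
    (bwd n p).card = n + 1 + p.1.card - p.2.card := by
  have h1 := bwd_ind hS hT n le_rfl
  have h2 := pc_succ (bwd n p) (2*n+1)
  have h3 : 2*n+1+1 ∉ bwd n p := by
    rw [show 2*n+1+1 = 2*n+2 by ring, show 2*n+2 = 2*(n+1-1)+2 by omega]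
    rw [bwd_mem_even hT (by omega)]
    rw [show n+1-1+1 = n+1 by omega]
    exact fun h => by have := hS h; simp only [mem_Icc] at this; omega
  rw [if_neg h3, show 2*n+1+1 = 2*n+2 by ring] at h2
  have h4 := pc_top (bwd_subset (p := p)) (le_refl (2*n+2))
  have h5 := pc_top hS (le_refl n)
  have h6 := pc_top hT (le_refl n)
  omega

include hS hT in
lemma bwd_raney (hdom : ∀ u, u ≤ n → pc p.2 u ≤ pc p.1 u) :
    ∀ k, 1 ≤ k → k ≤ 2*n+2 → k ≤ 2 * pc (bwd n p) k := by
  intro k hk1 hk2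
  rcases Nat.even_or_odd k with he | ho
  · obtain ⟨u, hu⟩ : ∃ u, k = 2*u+2 := by
      obtain ⟨t, ht⟩ := he; exact ⟨t-1, by omega⟩
    have hun : u ≤ n := by omega
    have h1 := bwd_ind hS hT u hun
    have h2 := hdom u hun
    have h3 := pc_mono (bwd n p) (show 2*u+1 ≤ k by omega)
    omega
  · obtain ⟨u, hu⟩ : ∃ u, k = 2*u+1 := by
      obtain ⟨t, ht⟩ := ho; exact ⟨t, by omega⟩
    have hun : u ≤ n := by omega
    have h1 := bwd_ind hS hT u hun
    have h2 := hdom u hun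
    subst hu
    omega

include hS hT in
lemma bwd_evens : (bwd n p).filter (fun x => Even x) = p.1.image (fun t => 2*t) := by
  ext k
  simp only [mem_filter, mem_image]
  constructor
  · rintro ⟨hk, hev⟩
    obtain ⟨t, ht⟩ := hev
    have hb := (bwd_mem (p := p) (k := k)).1 hk
    obtain ⟨⟨h1, h2⟩, h3⟩ := hb
    rw [if_pos (by omega)] at h3
    exact ⟨k/2, h3, by omega⟩
  · rintro ⟨t, ht, rfl⟩
    have hti := hS ht
    simp only [mem_Icc] at hti
    refine ⟨?_, ⟨t, by ring⟩⟩
    rw [show 2*t = 2*(t-1)+2 by omega, bwd_mem_even hT (by omega), show t-1+1 = t by omega]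
    exact ht

include hS hT in
lemma bwd_evens_card : ((bwd n p).filter (fun x => Even x)).card = p.1.card := by
  rw [bwd_evens hS hT]
  exact card_image_of_injective _ (fun a b h => by omega)

end Bwd

section RT
variable {n : ℕ}

lemma bwd_fwd {H : Finset ℕ} (hsub : H ⊆ Icc 1 (2*n+2)) (hcard : H.card = n+1)
    (hran : ∀ k, 1 ≤ k → k ≤ 2*n+2 → k ≤ 2 * pc H k) : bwd n (fwd n H) = H := by
  have h1 : (1:ℕ) ∈ H := one_mem hsub hran
  have htop := top_not_mem hsub hcard hran
  ext k
  rw [bwd_mem]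
  simp only [fwd, mem_filter, mem_Icc]
  constructor
  · rintro ⟨⟨hk1, hk2⟩, hcond⟩
    by_cases hp : k % 2 = 0
    · rw [if_pos hp] at hcond
      obtain ⟨_, hmem⟩ := hcond
      rwa [show 2*(k/2) = k by omega] at hmem
    · rw [if_neg hp] at hcond
      by_cases ht : 1 ≤ k/2 ∧ k/2 ≤ n
      · have := fun hmm => hcond ⟨⟨ht.1, ht.2⟩, hmm⟩
        by_contra hc
        exact this (by rwa [show 2*(k/2)+1 = k by omega])
      · rwa [show k = 1 by omega]
  · intro hk
    have hIcc := hsub hk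
    simp only [mem_Icc] at hIcc
    refine ⟨hIcc, ?_⟩
    have hne : k ≠ 2*n+2 := fun hc => htop (hc ▸ hk)
    by_cases hp : k % 2 = 0
    · rw [if_pos hp]
      exact ⟨⟨by omega, by omega⟩, by rwa [show 2*(k/2) = k by omega]⟩
    · rw [if_neg hp]
      rintro ⟨⟨ht1, ht2⟩, hnm⟩
      exact hnm (by rwa [show 2*(k/2)+1 = k by omega])

lemma fwd_bwd {p : Finset ℕ × Finset ℕ} (hS : p.1 ⊆ Icc 1 n) (hT : p.2 ⊆ Icc 1 n) :
    fwd n (bwd n p) = p := by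
  have e1 : (fwd n (bwd n p)).1 = p.1 := by
    ext t
    simp only [fwd, mem_filter, mem_Icc]
    constructor
    · rintro ⟨⟨ht1, ht2⟩, hm⟩
      rwa [show 2*t = 2*(t-1)+2 by omega, bwd_mem_even hT (by omega),
        show t-1+1 = t by omega] at hm
    · intro ht
      have := hS ht
      simp only [mem_Icc] at this
      refine ⟨this, ?_⟩
      rwa [show 2*t = 2*(t-1)+2 by omega, bwd_mem_even hT (by omega), show t-1+1 = t by omega]
  have e2 : (fwd n (bwd n p)).2 = p.2 := by
    ext t
    simp only [fwd, mem_filter, mem_Icc]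
    constructor
    · rintro ⟨⟨ht1, ht2⟩, hm⟩
      rw [bwd_mem_odd hS (by omega)] at hm
      by_contra hc
      exact hm hc
    · intro ht
      have := hT ht
      simp only [mem_Icc] at this
      refine ⟨this, ?_⟩
      rw [bwd_mem_odd hS (by omega)]
      exact fun hc => hc ht
  exact Prod.ext e1 e2

end RT

lemma raney_iff {n : ℕ} {H : Finset ℕ} : H ∈ RaneySet 2 (n+1) ↔
    (H ⊆ Finset.Icc 1 (2*n+2) ∧ H.card = n+1 ∧
      ∀ k, 1 ≤ k → k ≤ 2*n+2 → k ≤ 2 * pc H k) := by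
  unfold RaneySet
  simp only [Set.mem_setOf_eq, show 2*(n+1) = 2*n+2 by ring]
  constructor
  · rintro ⟨h1, h2, h3⟩
    refine ⟨h1, h2, fun k hk1 hk2 => ?_⟩
    have := h3 k hk1 hk2
    rwa [show H ∩ Icc 1 k = H.filter (· ≤ k) by
      ext x
      simp only [mem_inter, mem_Icc, mem_filter]
      constructor
      · rintro ⟨hx, _, hxk⟩; exact ⟨hx, hxk⟩
      · rintro ⟨hx, hxk⟩
        have := h1 hx
        simp only [mem_Icc] at this
        exact ⟨hx, this.1, hxk⟩] at this
  · rintro ⟨h1, h2, h3⟩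
    refine ⟨h1, h2, fun k hk1 hk2 => ?_⟩
    have := h3 k hk1 hk2
    rwa [show H ∩ Icc 1 k = H.filter (· ≤ k) by
      ext x
      simp only [mem_inter, mem_Icc, mem_filter]
      constructor
      · rintro ⟨hx, _, hxk⟩; exact ⟨hx, hxk⟩
      · rintro ⟨hx, hxk⟩
        have := h1 hx
        simp only [mem_Icc] at this
        exact ⟨hx, this.1, hxk⟩]

/-- the main bijective count -/
lemma count_eq_good (n i : ℕ) :
    Nat.card {H : Finset ℕ // H ∈ RaneySet 2 (n + 1) ∧
      (H.filter (fun x => Even x)).card = i} = (good n i).card := by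
  have e : {H : Finset ℕ // H ∈ RaneySet 2 (n + 1) ∧
      (H.filter (fun x => Even x)).card = i} ≃ {p // p ∈ good n i} := by
    refine ⟨fun H => ⟨fwd n H.1, ?_⟩, fun p => ⟨bwd n p.1, ?_⟩, ?_, ?_⟩
    · obtain ⟨H, hR, hev⟩ := H
      obtain ⟨hsub, hcard, hran⟩ := raney_iff.1 hR
      rw [good, mem_filter, mem_pairs]
      refine ⟨⟨⟨filter_subset _ _, ?_⟩, ⟨filter_subset _ _, ?_⟩⟩, fun u hu => fwd_dom hsub hran u hu⟩
      · rw [fwd_S_card hsub hcard hran, hev]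
      · rw [fwd_T_card hsub hcard hran, hev]
    · obtain ⟨p, hp⟩ := p
      rw [good, mem_filter, mem_pairs] at hp
      obtain ⟨⟨⟨hS, hSc⟩, hT, hTc⟩, hdom⟩ := hp
      refine ⟨raney_iff.2 ⟨bwd_subset, ?_, bwd_raney hS hT hdom⟩, ?_⟩
      · rw [bwd_card hS hT hdom, hSc, hTc]; omega
      · rw [bwd_evens_card hS hT, hSc]
    · rintro ⟨H, hR, hev⟩
      obtain ⟨hsub, hcard, hran⟩ := raney_iff.1 hR
      exact Subtype.ext (bwd_fwd hsub hcard hran)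
    · rintro ⟨p, hp⟩
      rw [good, mem_filter, mem_pairs] at hp
      exact Subtype.ext (fwd_bwd hp.1.1.1 hp.1.2.1)
  rw [Nat.card_congr e, Nat.card_eq_finsetCard]

lemma nar_key (j l : ℕ) :
    ((l+2).factorial * (l+1).factorial * (j+2).factorial * (j+1).factorial) *
      ((j+l+2).choose (j+1) * (j+l+2).choose (j+1)) =
    ((l+2).factorial * (l+1).factorial * (j+2).factorial * (j+1).factorial) *
      ((j+l+2).choose j * (j+l+2).choose (j+2)) +
      (j+l+3).factorial * (j+l+2).factorial := by
  have A := Nat.choose_mul_factorial_mul_factorial (show j+1 ≤ j+l+2 by omega)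
  rw [show (j+l+2)-(j+1) = l+1 by omega] at A
  have B := Nat.choose_mul_factorial_mul_factorial (show j ≤ j+l+2 by omega)
  rw [show (j+l+2)-j = l+2 by omega] at B
  have C := Nat.choose_mul_factorial_mul_factorial (show j+2 ≤ j+l+2 by omega)
  rw [show (j+l+2)-(j+2) = l by omega] at C
  have e1 : ((l+2).factorial * (l+1).factorial * (j+2).factorial * (j+1).factorial) *
      ((j+l+2).choose (j+1) * (j+l+2).choose (j+1)) =
      (l+2)*(j+2) * (((j+l+2).choose (j+1) * (j+1).factorial * (l+1).factorial) *
        ((j+l+2).choose (j+1) * (j+1).factorial * (l+1).factorial)) := by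
    rw [show (l+2).factorial = (l+2) * (l+1).factorial from Nat.factorial_succ (l+1),
        show (j+2).factorial = (j+2) * (j+1).factorial from Nat.factorial_succ (j+1)]
    ring
  have e2 : ((l+2).factorial * (l+1).factorial * (j+2).factorial * (j+1).factorial) *
      ((j+l+2).choose j * (j+l+2).choose (j+2)) =
      (l+1)*(j+1) * (((j+l+2).choose j * j.factorial * (l+2).factorial) *
        ((j+l+2).choose (j+2) * (j+2).factorial * l.factorial)) := by
    rw [show (l+1).factorial = (l+1) * l.factorial from Nat.factorial_succ l,
        show (j+1).factorial = (j+1) * j.factorial from Nat.factorial_succ j]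
    ring
  rw [e1, e2, A, B, C,
    show (j+l+3).factorial = (j+l+3) * (j+l+2).factorial from Nat.factorial_succ (j+l+2)]
  ring

end Stmt4

/-- For `0 ≤ i ≤ n`, the number of Raney sequences `H ∈ R_{n+1}^2` with exactly `i` even
elements equals the Narayana number `(n+1)!·n! / ((n-i+1)!·(n-i)!·(i+1)!·i!)`. -/
theorem stmt_4 (n i : ℕ) (hi : i ≤ n) :
    Nat.card {H : Finset ℕ // H ∈ RaneySet 2 (n + 1) ∧
        (H.filter (fun x => Even x)).card = i} =
      Nat.factorial (n + 1) * Nat.factorial n /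
        (Nat.factorial (n - i + 1) * Nat.factorial (n - i) *
          Nat.factorial (i + 1) * Nat.factorial i) := by
  classical
  rw [Stmt4.count_eq_good n i]
  rcases Nat.eq_zero_or_pos i with rfl | hip
  · -- i = 0 : good = all pairs of empty sets
    have hg : Stmt4.good n 0 = Stmt4.pairs n 0 0 := by
      rw [Stmt4.good]
      apply Finset.filter_true_of_mem
      intro p hp
      rw [Stmt4.mem_pairs] at hp
      have : p.2 = ∅ := Finset.card_eq_zero.1 hp.2.2
      intro u _
      simp [Stmt4.pc, this]
    rw [hg, Stmt4.pairs_card, Nat.choose_zero_right]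
    have hden : (n - 0 + 1).factorial * (n - 0).factorial * (0 + 1).factorial *
        Nat.factorial 0 = (n+1).factorial * n.factorial := by
      simp [Nat.factorial]
    rw [hden, Nat.div_self (by positivity)]
  · -- 1 ≤ i
    have hbad := Stmt4.bad_card (n := n) hip
    have hgb := Stmt4.good_add_bad n i
    set D := (n - i + 1).factorial * (n - i).factorial * (i + 1).factorial * i.factorial with hD
    have hDpos : 0 < D := by positivity
    have key : D * (n.choose i * n.choose i) =
        D * (n.choose (i-1) * n.choose (i+1)) + (n+1).factorial * n.factorial := by
      rcases Nat.lt_or_ge i n with hin | hin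
      · -- i < n
        obtain ⟨j, rfl⟩ : ∃ j, i = j + 1 := ⟨i - 1, by omega⟩
        obtain ⟨l, rfl⟩ : ∃ l, n = j + l + 2 := ⟨n - j - 2, by omega⟩
        have := Stmt4.nar_key j l
        rw [hD, show j+l+2-(j+1)+1 = l+2 by omega, show j+l+2-(j+1) = l+1 by omega,
          show j+1-1 = j by omega, show j+1+1 = j+2 by omega, show j+l+2+1 = j+l+3 by omega]
        exact this
      · -- i = n
        have hie : i = n := le_antisymm hi hin
        subst hie
        rw [hD, Nat.choose_self, Nat.choose_eq_zero_of_lt (show i < i + 1 by omega)]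
        rw [show i - i + 1 = 1 by omega, Nat.sub_self]
        simp [Nat.factorial]
    have e1 : D * ((Stmt4.good n i).card + (Stmt4.bad n i).card) =
        D * (n.choose i * n.choose i) := by rw [hgb]
    rw [Nat.mul_add, hbad, key] at e1
    have e2 : D * (Stmt4.good n i).card = (n+1).factorial * n.factorial := by
      have e1' : D * (Stmt4.good n i).card + D * (n.choose (i-1) * n.choose (i+1)) =
          (n+1).factorial * n.factorial + D * (n.choose (i-1) * n.choose (i+1)) := by
        rw [e1]; ring
      exact Nat.add_right_cancel e1'
    symm
    apply Nat.div_eq_of_eq_mul_left hDpos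
    rw [← e2]; ring
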